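/- arXiv:2212.04122 — 4 statements merged into one kernel-verified Lean document; each statement's English description precedes it below -/
import Mathlib

section
/- The potential function F is differentiable, and for every player i, time t ∈ {0,…,T}, state s and action a, its partial derivative with respect to x^i_{tsa} equals ℓ^i_{tsa}(x) = C^i_{tsa} + k(D^i_{ts}(x) + G^i_{tsa}(x)); that is, ∂F/∂x^i_{tsa}(x) = C^i_{tsa} + k(1 − ∏_{j≠i}(1 − ∑_{a'} x^j_{tsa'})) + k(1 − ∏_{j≠i}(1 − x^j_{tsa})). -/
open Finset

/-- State-level collision risk `Dⁱₜₛ(x) = 1 - ∏_{j ≠ i} (1 - ∑ₐ xʲₜₛₐ)`. -/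
noncomputable def Drisk {N T S A : ℕ} (x : Fin N → Fin (T + 1) → Fin S → Fin A → ℝ)
    (i : Fin N) (t : Fin (T + 1)) (s : Fin S) : ℝ :=
  1 - ∏ j ∈ univ.erase i, (1 - ∑ a, x j t s a)

/-- State-action-level collision risk `Gⁱₜₛₐ(x) = 1 - ∏_{j ≠ i} (1 - xʲₜₛₐ)`. -/
noncomputable def Grisk {N T S A : ℕ} (x : Fin N → Fin (T + 1) → Fin S → Fin A → ℝ)
    (i : Fin N) (t : Fin (T + 1)) (s : Fin S) (a : Fin A) : ℝ :=
  1 - ∏ j ∈ univ.erase i, (1 - x j t s a)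

/-- Congestion cost `ℓⁱₜₛₐ(x) = Cⁱₜₛₐ + k (Dⁱₜₛ(x) + Gⁱₜₛₐ(x))`. -/
noncomputable def ell {N T S A : ℕ} (k : ℝ) (C : Fin N → Fin (T + 1) → Fin S → Fin A → ℝ)
    (x : Fin N → Fin (T + 1) → Fin S → Fin A → ℝ)
    (i : Fin N) (t : Fin (T + 1)) (s : Fin S) (a : Fin A) : ℝ :=
  C i t s a + k * (Drisk x i t s + Grisk x i t s a)

/-- The potential function `F`. -/
noncomputable def potF {N T S A : ℕ} (k : ℝ) (C : Fin N → Fin (T + 1) → Fin S → Fin A → ℝ)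
    (x : Fin N → Fin (T + 1) → Fin S → Fin A → ℝ) : ℝ :=
  (∑ i, ∑ t, ∑ s, ∑ a, x i t s a * C i t s a) +
    k * ∑ t, ∑ s,
      ((∑ i, ∑ a, 2 * x i t s a) + (∏ i, (1 - ∑ a, x i t s a)) +
        ∑ a, ∏ i, (1 - x i t s a))

section aux

variable {N T S A : ℕ}

/-- The coordinate projection as a continuous linear map. -/
noncomputable def coordCLM (i : Fin N) (t : Fin (T + 1)) (s : Fin S) (a : Fin A) :
    (Fin N → Fin (T + 1) → Fin S → Fin A → ℝ) →L[ℝ] ℝ :=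
  (ContinuousLinearMap.proj a).comp ((ContinuousLinearMap.proj s).comp
    ((ContinuousLinearMap.proj t).comp
      (ContinuousLinearMap.proj (R := ℝ) (φ := fun _ : Fin N => Fin (T + 1) → Fin S → Fin A → ℝ) i)))

lemma hasFDerivAt_coord (x : Fin N → Fin (T + 1) → Fin S → Fin A → ℝ)
    (i : Fin N) (t : Fin (T + 1)) (s : Fin S) (a : Fin A) :
    HasFDerivAt (fun y : Fin N → Fin (T + 1) → Fin S → Fin A → ℝ => y i t s a)
      (coordCLM i t s a) x :=
  (coordCLM i t s a).hasFDerivAt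

/-- The explicit derivative of `potF`. -/
noncomputable def potFDeriv (k : ℝ) (C : Fin N → Fin (T + 1) → Fin S → Fin A → ℝ)
    (x : Fin N → Fin (T + 1) → Fin S → Fin A → ℝ) :
    (Fin N → Fin (T + 1) → Fin S → Fin A → ℝ) →L[ℝ] ℝ :=
  (∑ i, ∑ t, ∑ s, ∑ a, C i t s a • coordCLM i t s a) +
    k • ∑ t, ∑ s,
      ((∑ i, ∑ a, (2 : ℝ) • coordCLM i t s a)
        + (∑ i ∈ (univ : Finset (Fin N)),
            (∏ j ∈ univ.erase i, (1 - ∑ a, x j t s a)) • (-(∑ a, coordCLM i t s a)))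
        + ∑ a, ∑ i ∈ (univ : Finset (Fin N)),
            (∏ j ∈ univ.erase i, (1 - x j t s a)) • (-(coordCLM i t s a)))

lemma hasFDerivAt_potF (k : ℝ) (C : Fin N → Fin (T + 1) → Fin S → Fin A → ℝ)
    (x : Fin N → Fin (T + 1) → Fin S → Fin A → ℝ) :
    HasFDerivAt (potF k C) (potFDeriv k C x) x := by
  unfold potF potFDeriv
  apply HasFDerivAt.add
  · apply HasFDerivAt.fun_sum; intro i _
    apply HasFDerivAt.fun_sum; intro t _
    apply HasFDerivAt.fun_sum; intro s _
    apply HasFDerivAt.fun_sum; intro a _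
    exact (hasFDerivAt_coord x i t s a).mul_const _
  · apply HasFDerivAt.const_mul
    apply HasFDerivAt.fun_sum; intro t _
    apply HasFDerivAt.fun_sum; intro s _
    apply HasFDerivAt.add
    apply HasFDerivAt.add
    · apply HasFDerivAt.fun_sum; intro i _
      apply HasFDerivAt.fun_sum; intro a _
      exact (hasFDerivAt_coord x i t s a).const_mul _
    · exact HasFDerivAt.finset_prod fun i _ =>
        (HasFDerivAt.fun_sum fun a _ => hasFDerivAt_coord x i t s a).const_sub 1
    · apply HasFDerivAt.fun_sum; intro a _
      exact HasFDerivAt.finset_prod fun i _ => (hasFDerivAt_coord x i t s a).const_sub 1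

end aux

/-- The potential `F` is differentiable and its partial derivative with respect to
`xⁱₜₛₐ` equals the congestion cost
`ℓⁱₜₛₐ(x) = Cⁱₜₛₐ + k (1 - ∏_{j≠i}(1 - ∑ₐ' xʲₜₛₐ')) + k (1 - ∏_{j≠i}(1 - xʲₜₛₐ))`. -/
theorem potential_gradient_eq_congestion_cost (N T S A : ℕ) (k : ℝ) (hk : 0 ≤ k)
    (C : Fin N → Fin (T + 1) → Fin S → Fin A → ℝ) :
    Differentiable ℝ (potF k C) ∧
    ∀ (x : Fin N → Fin (T + 1) → Fin S → Fin A → ℝ)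
      (i : Fin N) (t : Fin (T + 1)) (s : Fin S) (a : Fin A),
      fderiv ℝ (potF k C) x (Pi.single i (Pi.single t (Pi.single s (Pi.single a 1))))
        = C i t s a
            + k * (1 - ∏ j ∈ univ.erase i, (1 - ∑ a', x j t s a'))
            + k * (1 - ∏ j ∈ univ.erase i, (1 - x j t s a)) := by
  constructor
  · intro x
    exact (hasFDerivAt_potF k C x).differentiableAt
  · intro x i t s a
    rw [(hasFDerivAt_potF k C x).fderiv]
    unfold potFDeriv coordCLM
    simp only [ContinuousLinearMap.add_apply, ContinuousLinearMap.coe_sum',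
      Finset.sum_apply, ContinuousLinearMap.smul_apply, ContinuousLinearMap.neg_apply,
      ContinuousLinearMap.coe_comp', Function.comp_apply, ContinuousLinearMap.proj_apply,
      Pi.single_apply, apply_ite, Pi.zero_apply, smul_eq_mul]
    simp [Finset.sum_ite_eq, Finset.sum_ite_eq', mul_ite, ite_mul, Finset.mul_sum]
    rw [Finset.sum_eq_single t, Finset.sum_eq_single s] <;>
      simp (config := {contextual := true}) <;> ring
end

section
/- For every player i, the potential F is affine in player i's block of variables; more precisely, for any joint distribution x = (x^1,…,x^N) and any y^i ∈ ℝ^{(T+1)×S×A}, F(y^i, x^{−i}) − F(x^i, x^{−i}) = ∑_{t,s,a} ℓ^i_{tsa}(x) (y^i_{tsa} − x^i_{tsa}), where (y^i, x^{−i}) denotes x with the i-th block replaced by y^i. -/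
open Finset

/-- The potential `F` is affine in each player's block:
`F(yⁱ, x⁻ⁱ) - F(xⁱ, x⁻ⁱ) = ∑_{t,s,a} ℓⁱₜₛₐ(x) (yⁱₜₛₐ - xⁱₜₛₐ)`. -/
theorem potential_affine_in_own_block
    (N T S A : ℕ) (k : ℝ) (hk : 0 ≤ k)
    (C : Fin N → Fin (T + 1) → Fin S → Fin A → ℝ)
    (x : Fin N → Fin (T + 1) → Fin S → Fin A → ℝ) (i : Fin N)
    (y : Fin (T + 1) → Fin S → Fin A → ℝ) :
    potF k C (Function.update x i y) - potF k C x
      = ∑ t, ∑ s, ∑ a, ell k C x i t s a * (y t s a - x i t s a) := by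
  classical
  have hsplit : ∀ (F : Fin N → ℝ), (∑ j, F j) = F i + ∑ j ∈ univ.erase i, F j :=
    fun F => (Finset.add_sum_erase _ _ (mem_univ i)).symm
  have hpsplit : ∀ (F : Fin N → ℝ), (∏ j, F j) = F i * ∏ j ∈ univ.erase i, F j :=
    fun F => (Finset.mul_prod_erase _ _ (mem_univ i)).symm
  have e1 : potF k C (Function.update x i y)
      = ((∑ t, ∑ s, ∑ a, y t s a * C i t s a)
          + ∑ j ∈ univ.erase i, ∑ t, ∑ s, ∑ a, x j t s a * C j t s a)
        + k * ∑ t, ∑ s,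
            ((((∑ a, 2 * y t s a) + ∑ j ∈ univ.erase i, ∑ a, 2 * x j t s a)
              + (1 - ∑ a, y t s a) * ∏ j ∈ univ.erase i, (1 - ∑ a, x j t s a))
              + ∑ a, (1 - y t s a) * ∏ j ∈ univ.erase i, (1 - x j t s a)) := by
    unfold potF
    congr 1
    · rw [hsplit]
      congr 1
      · simp
      · refine Finset.sum_congr rfl fun j hj => ?_
        rw [Function.update_of_ne (Finset.ne_of_mem_erase hj)]
    · congr 1
      refine Finset.sum_congr rfl fun t _ => Finset.sum_congr rfl fun s _ => ?_
      congr 1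
      · congr 1
        · rw [hsplit]
          congr 1
          · simp
          · refine Finset.sum_congr rfl fun j hj => ?_
            refine Finset.sum_congr rfl fun a _ => ?_
            rw [Function.update_of_ne (Finset.ne_of_mem_erase hj)]
        · rw [hpsplit]
          congr 1
          · simp
          · refine Finset.prod_congr rfl fun j hj => ?_
            rw [Function.update_of_ne (Finset.ne_of_mem_erase hj)]
      · refine Finset.sum_congr rfl fun a _ => ?_
        rw [hpsplit]
        congr 1
        · simp
        · refine Finset.prod_congr rfl fun j hj => ?_
          rw [Function.update_of_ne (Finset.ne_of_mem_erase hj)]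
  have e2 : potF k C x
      = ((∑ t, ∑ s, ∑ a, x i t s a * C i t s a)
          + ∑ j ∈ univ.erase i, ∑ t, ∑ s, ∑ a, x j t s a * C j t s a)
        + k * ∑ t, ∑ s,
            ((((∑ a, 2 * x i t s a) + ∑ j ∈ univ.erase i, ∑ a, 2 * x j t s a)
              + (1 - ∑ a, x i t s a) * ∏ j ∈ univ.erase i, (1 - ∑ a, x j t s a))
              + ∑ a, (1 - x i t s a) * ∏ j ∈ univ.erase i, (1 - x j t s a)) := by
    unfold potF
    congr 1
    · exact hsplit _
    · congr 1
      refine Finset.sum_congr rfl fun t _ => Finset.sum_congr rfl fun s _ => ?_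
      congr 1
      · congr 1
        · exact hsplit _
        · exact hpsplit _
      · exact Finset.sum_congr rfl fun a _ => hpsplit _
  have hcomb : ∀ (Y X E S1 S2 : ℝ),
      ((Y + E) + k * S1) - ((X + E) + k * S2) = (Y - X) + k * (S1 - S2) := by
    intros; ring
  rw [e1, e2, hcomb]
  simp only [← Finset.sum_sub_distrib]
  simp only [Finset.mul_sum]
  simp only [← Finset.sum_add_distrib]
  refine Finset.sum_congr rfl fun t _ => Finset.sum_congr rfl fun s _ => ?_
  simp only [ell, Drisk, Grisk]
  rw [show ((((∑ a, 2 * y t s a) + ∑ j ∈ univ.erase i, ∑ a, 2 * x j t s a)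
              + (1 - ∑ a, y t s a) * ∏ j ∈ univ.erase i, (1 - ∑ a, x j t s a))
              + ∑ a, (1 - y t s a) * ∏ j ∈ univ.erase i, (1 - x j t s a))
          - ((((∑ a, 2 * x i t s a) + ∑ j ∈ univ.erase i, ∑ a, 2 * x j t s a)
              + (1 - ∑ a, x i t s a) * ∏ j ∈ univ.erase i, (1 - ∑ a, x j t s a))
              + ∑ a, (1 - x i t s a) * ∏ j ∈ univ.erase i, (1 - x j t s a))
        = ∑ a, (2 * y t s a - 2 * x i t s a
            + (x i t s a - y t s a) * ∏ j ∈ univ.erase i, (1 - ∑ a, x j t s a)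
            + ((1 - y t s a) - (1 - x i t s a)) * ∏ j ∈ univ.erase i, (1 - x j t s a)) from by
      simp only [sub_mul, one_mul, Finset.sum_sub_distrib, Finset.sum_add_distrib,
        Finset.sum_mul]
      ring]
  rw [Finset.mul_sum, ← Finset.sum_add_distrib]
  refine Finset.sum_congr rfl fun a _ => ?_
  ring
end

section
/- For any cost C ∈ ℝ^{(T+1)×S×A} and any z in the feasible set 𝒳(P, p0), the expected total cost is bounded below by the optimal value of the Bellman recursion: ∑_{t,s,a} C_{tsa} z_{tsa} ≥ ∑_{s} p0_s · min_{a}{Q_{0sa}}, where Q is the Q-value function defined by the backward recursion Q_{Tsa} = C_{Tsa} and Q_{(t−1)sa} = C_{(t−1)sa} + ∑_{s'} P_{t,s',s,a} min_{a'} Q_{ts'a'}. -/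
open Finset

/-- The feasible set `𝒳(P, p0)` of state-action distributions of a finite-horizon MDP:
nonnegativity, the initial condition `∑ₐ z₀ₛₐ = p0ₛ`, and the flow conservation
`∑ₐ z₍ₜ₊₁₎ₛₐ = ∑_{s',a} P_{t,s,s',a} z_{t s' a}`. -/
def Feasible {T S A : ℕ} (P : Fin T → Fin S → Fin S → Fin A → ℝ) (p0 : Fin S → ℝ)
    (z : Fin (T + 1) → Fin S → Fin A → ℝ) : Prop :=
  (∀ t s a, 0 ≤ z t s a) ∧
  (∀ s, ∑ a, z 0 s a = p0 s) ∧
  ∀ (t : Fin T) (s : Fin S),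
    ∑ a, z t.succ s a = ∑ s', ∑ a, P t s s' a * z t.castSucc s' a

/-- For any cost `C` and any feasible `z ∈ 𝒳(P, p0)`, the expected total cost is
bounded below by the optimal value of the Bellman recursion:
`∑_{t,s,a} C_{tsa} z_{tsa} ≥ ∑ₛ p0ₛ · minₐ Q₀ₛₐ`, where `Q` satisfies the backward recursion
`Q_{Tsa} = C_{Tsa}` and `Q_{(t-1)sa} = C_{(t-1)sa} + ∑_{s'} P_{t,s',s,a} min_{a'} Q_{t s' a'}`. -/
theorem expected_cost_ge_bellman_value
    (T S A : ℕ) [NeZero A] (P : Fin T → Fin S → Fin S → Fin A → ℝ)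
    (hP0 : ∀ (t : Fin T) (s' s : Fin S) (a : Fin A), 0 ≤ P t s' s a)
    (hP1 : ∀ (t : Fin T) (s : Fin S) (a : Fin A), ∑ s', P t s' s a = 1)
    (p0 : Fin S → ℝ) (hp0 : ∀ s, 0 ≤ p0 s) (hp1 : ∑ s, p0 s = 1)
    (C : Fin (T + 1) → Fin S → Fin A → ℝ)
    (Q : Fin (T + 1) → Fin S → Fin A → ℝ)
    (hQT : ∀ s a, Q (Fin.last T) s a = C (Fin.last T) s a)
    (hQrec : ∀ (t : Fin T) (s : Fin S) (a : Fin A),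
      Q t.castSucc s a = C t.castSucc s a +
        ∑ s', P t s' s a * univ.inf' univ_nonempty (fun a' => Q t.succ s' a'))
    (z : Fin (T + 1) → Fin S → Fin A → ℝ) (hz : Feasible P p0 z) :
    ∑ t, ∑ s, ∑ a, C t s a * z t s a
      ≥ ∑ s, p0 s * univ.inf' univ_nonempty (fun a => Q 0 s a) := by
  obtain ⟨hz0, hzinit, hzflow⟩ := hz
  set V : Fin (T+1) → Fin S → ℝ :=
    fun t s => univ.inf' univ_nonempty (fun a => Q t s a) with hV
  set μ : Fin (T+1) → Fin S → ℝ := fun t s => ∑ a, z t s a with hμ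
  have hμ0 : ∀ t s, 0 ≤ μ t s := fun t s => Finset.sum_nonneg fun a _ => hz0 t s a
  have hVQ : ∀ t s a, V t s ≤ Q t s a := fun t s a => Finset.inf'_le _ (mem_univ a)
  have hflowV : ∀ (t : Fin T), ∑ s', V t.succ s' * μ t.succ s'
      = ∑ s, ∑ a, (∑ s', P t s' s a * V t.succ s') * z t.castSucc s a := by
    intro t
    have h1 : ∀ s', V t.succ s' * μ t.succ s'
        = ∑ s, ∑ a, V t.succ s' * (P t s' s a * z t.castSucc s a) := by
      intro s'
      simp only [hμ]
      rw [hzflow t s', Finset.mul_sum]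
      exact Finset.sum_congr rfl fun s _ => by rw [Finset.mul_sum]
    rw [Finset.sum_congr rfl fun s' _ => h1 s', Finset.sum_comm]
    refine Finset.sum_congr rfl fun s _ => ?_
    rw [Finset.sum_comm]
    refine Finset.sum_congr rfl fun a _ => ?_
    rw [Finset.sum_mul]
    exact Finset.sum_congr rfl fun s' _ => by ring
  have key1 : ∑ t, ∑ s, ∑ a, C t s a * z t s a
      = ∑ t, ∑ s, ∑ a, Q t s a * z t s a
        - ∑ t : Fin T, ∑ s', V t.succ s' * μ t.succ s' := by
    rw [Fin.sum_univ_castSucc (f := fun t => ∑ s, ∑ a, C t s a * z t s a),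
        Fin.sum_univ_castSucc (f := fun t => ∑ s, ∑ a, Q t s a * z t s a)]
    have hlast : ∑ s, ∑ a, C (Fin.last T) s a * z (Fin.last T) s a
        = ∑ s, ∑ a, Q (Fin.last T) s a * z (Fin.last T) s a := by
      simp [hQT]
    have hmid : ∀ t : Fin T, ∑ s, ∑ a, C t.castSucc s a * z t.castSucc s a
        = ∑ s, ∑ a, Q t.castSucc s a * z t.castSucc s a
          - ∑ s', V t.succ s' * μ t.succ s' := by
      intro t
      rw [hflowV t, ← Finset.sum_sub_distrib]
      refine Finset.sum_congr rfl fun s _ => ?_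
      rw [← Finset.sum_sub_distrib]
      refine Finset.sum_congr rfl fun a _ => ?_
      rw [hQrec t s a]; ring
    rw [Finset.sum_congr rfl fun t _ => hmid t, Finset.sum_sub_distrib, hlast]
    ring
  have key2 : ∑ t, ∑ s, V t s * μ t s ≤ ∑ t, ∑ s, ∑ a, Q t s a * z t s a := by
    refine Finset.sum_le_sum fun t _ => Finset.sum_le_sum fun s _ => ?_
    simp only [hμ]
    rw [Finset.mul_sum]
    exact Finset.sum_le_sum fun a _ =>
      mul_le_mul_of_nonneg_right (hVQ t s a) (hz0 t s a)
  have key3 : ∑ t, ∑ s, V t s * μ t s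
      = (∑ s, V 0 s * μ 0 s) + ∑ t : Fin T, ∑ s, V t.succ s * μ t.succ s := by
    exact Fin.sum_univ_succ (f := fun t => ∑ s, V t s * μ t s)
  have hfin : ∑ s, p0 s * univ.inf' univ_nonempty (fun a => Q 0 s a)
      = ∑ s, V 0 s * μ 0 s := by
    refine Finset.sum_congr rfl fun s _ => ?_
    simp only [hμ, hV]
    rw [hzinit s]; ring
  rw [ge_iff_le, hfin, key1]
  have := key2
  rw [key3] at this
  linarith
end

section
/- A joint state-action distribution x = (x^1,…,x^N) with x^i ∈ 𝒳(P^i, p^i_0) for all i is a Nash equilibrium of the MDP congestion game with costs ℓ^i (i.e., for all i, t, s, a: x^i_{tsa} > 0 implies Q^i_{tsa}(x) = min_{a'} Q^i_{tsa'}(x), where Q^i(x) is the Q-value recursion with stage costs ℓ^i(x) and kernel P^i) if and only if for every player i, x^i minimizes the linear objective y ↦ ∑_{t,s,a} ℓ^i_{tsa}(x) y_{tsa} over y ∈ 𝒳(P^i, p^i_0). -/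
open Finset

lemma key_identity {T S A : ℕ} [NeZero A]
    (P : Fin T → Fin S → Fin S → Fin A → ℝ) (p0 : Fin S → ℝ)
    (L Q : Fin (T + 1) → Fin S → Fin A → ℝ)
    (hQT : ∀ s a, Q (Fin.last T) s a = L (Fin.last T) s a)
    (hQrec : ∀ (t : Fin T) (s : Fin S) (a : Fin A),
      Q t.castSucc s a = L t.castSucc s a +
        ∑ s', P t s' s a * univ.inf' univ_nonempty (fun a' => Q t.succ s' a'))
    (z : Fin (T + 1) → Fin S → Fin A → ℝ) (hz : Feasible P p0 z) :
    ∑ t, ∑ s, ∑ a, L t s a * z t s a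
      = (∑ s, p0 s * univ.inf' univ_nonempty (fun a' => Q 0 s a')) +
        ∑ t, ∑ s, ∑ a,
          (Q t s a - univ.inf' univ_nonempty (fun a' => Q t s a')) * z t s a := by
  set V : Fin (T + 1) → Fin S → ℝ :=
    fun t s => univ.inf' univ_nonempty (fun a' => Q t s a') with hV
  obtain ⟨hz0, hzinit, hzflow⟩ := hz
  have hA : ∑ t, ∑ s, ∑ a, Q t s a * z t s a
      = (∑ t, ∑ s, ∑ a, L t s a * z t s a)
        + ∑ t : Fin T, ∑ s, V t.succ s * ∑ a, z t.succ s a := by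
    rw [Fin.sum_univ_castSucc (f := fun t => ∑ s, ∑ a, Q t s a * z t s a),
        Fin.sum_univ_castSucc (f := fun t => ∑ s, ∑ a, L t s a * z t s a)]
    have hterm : ∀ t : Fin T, ∑ s, ∑ a, Q t.castSucc s a * z t.castSucc s a
        = (∑ s, ∑ a, L t.castSucc s a * z t.castSucc s a)
          + ∑ s, V t.succ s * ∑ a, z t.succ s a := by
      intro t
      have h1 : ∀ s a, Q t.castSucc s a * z t.castSucc s a
          = L t.castSucc s a * z t.castSucc s a
            + ∑ s', V t.succ s' * (P t s' s a * z t.castSucc s a) := by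
        intro s a
        rw [hQrec t s a, add_mul, Finset.sum_mul]
        congr 1
        exact Finset.sum_congr rfl fun s' _ => by ring
      simp_rw [h1, Finset.sum_add_distrib]
      congr 1
      have hswap : ∑ s, ∑ a, ∑ s', V t.succ s' * (P t s' s a * z t.castSucc s a)
          = ∑ s', ∑ s, ∑ a, V t.succ s' * (P t s' s a * z t.castSucc s a) := by
        rw [show (∑ s, ∑ a, ∑ s', V t.succ s' * (P t s' s a * z t.castSucc s a))
            = ∑ s, ∑ s', ∑ a : Fin A, V t.succ s' * (P t s' s a * z t.castSucc s a) from
          Finset.sum_congr rfl fun s _ => Finset.sum_comm]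
        exact Finset.sum_comm
      rw [hswap]
      refine Finset.sum_congr rfl fun s' _ => ?_
      rw [hzflow t s', Finset.mul_sum]
      exact Finset.sum_congr rfl fun s _ => by rw [Finset.mul_sum]
    simp_rw [hterm, hQT, Finset.sum_add_distrib]
    ring
  have hB : ∑ t, ∑ s, V t s * ∑ a, z t s a
      = (∑ s, p0 s * V 0 s) + ∑ t : Fin T, ∑ s, V t.succ s * ∑ a, z t.succ s a := by
    rw [Fin.sum_univ_succ (f := fun t => ∑ s, V t s * ∑ a, z t s a)]
    congr 1
    exact Finset.sum_congr rfl fun s _ => by rw [hzinit s, mul_comm]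
  have hC : ∑ t, ∑ s, ∑ a, (Q t s a - V t s) * z t s a
      = (∑ t, ∑ s, ∑ a, Q t s a * z t s a) - ∑ t, ∑ s, V t s * ∑ a, z t s a := by
    simp_rw [sub_mul, Finset.sum_sub_distrib, ← Finset.mul_sum]
  rw [hC, hA, hB]; ring

lemma exists_greedy {T S A : ℕ} [NeZero A]
    (P : Fin T → Fin S → Fin S → Fin A → ℝ)
    (hP0 : ∀ t s' s a, 0 ≤ P t s' s a)
    (p0 : Fin S → ℝ) (hp0 : ∀ s, 0 ≤ p0 s)
    (Q : Fin (T + 1) → Fin S → Fin A → ℝ) :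
    ∃ y, Feasible P p0 y ∧
      ∀ t s a, y t s a ≠ 0 →
        Q t s a = univ.inf' univ_nonempty (fun a' => Q t s a') := by
  classical
  have hast : ∀ (t : Fin (T + 1)) (s : Fin S), ∃ a : Fin A,
      univ.inf' univ_nonempty (fun a' => Q t s a') = Q t s a := by
    intro t s
    obtain ⟨a, -, ha⟩ := exists_mem_eq_inf' univ_nonempty (fun a' => Q t s a')
    exact ⟨a, ha⟩
  choose astar hastar using hast
  let g : ℕ → Fin S → ℝ := fun n => Nat.rec p0
    (fun n gn s => if h : n < T then
        ∑ s', P ⟨n, h⟩ s s' (astar ⟨n, Nat.lt_succ_of_lt h⟩ s') * gn s'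
      else 0) n
  have hg0 : ∀ n s, 0 ≤ g n s := by
    intro n
    induction n with
    | zero => exact hp0
    | succ n ih =>
      intro s
      show 0 ≤ if h : n < T then _ else (0 : ℝ)
      split
      · exact Finset.sum_nonneg fun s' _ => mul_nonneg (hP0 _ _ _ _) (ih s')
      · exact le_refl 0
  refine ⟨fun t s a => if a = astar t s then g t.val s else 0, ⟨?_, ?_, ?_⟩, ?_⟩
  · intro t s a
    dsimp only
    split
    · exact hg0 _ _
    · exact le_refl 0
  · intro s
    rw [Finset.sum_ite_eq' univ (astar 0 s) (fun _ => g (0 : Fin (T+1)).val s)]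
    simp only [mem_univ, if_true]
    rfl
  · intro t s
    have hL : ∑ a, (if a = astar t.succ s then g t.succ.val s else 0) = g (t.val + 1) s := by
      rw [Finset.sum_ite_eq' univ (astar t.succ s) (fun _ => g t.succ.val s)]
      simp
    rw [hL]
    have hRv : g (t.val + 1) s
        = ∑ s', P t s s' (astar t.castSucc s') * g t.val s' := by
      show (if h : t.val < T then _ else (0:ℝ)) = _
      rw [dif_pos t.isLt]
      congr 1
    rw [hRv]
    refine Finset.sum_congr rfl fun s' _ => ?_
    rw [show ∑ a, P t s s' a * (if a = astar t.castSucc s' then g t.castSucc.val s' else 0)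
        = ∑ a, (if a = astar t.castSucc s' then P t s s' a * g t.castSucc.val s' else 0) from
      Finset.sum_congr rfl fun a _ => by split <;> simp]
    rw [Finset.sum_ite_eq' univ (astar t.castSucc s') (fun a => P t s s' a * g t.castSucc.val s')]
    simp [Fin.coe_castSucc]
  · intro t s a hne
    by_cases h : a = astar t s
    · rw [h]; exact (hastar t s).symm
    · simp [h] at hne

/-- `x = (x¹,…,xᴺ)` with `xⁱ ∈ 𝒳(Pⁱ, p0ⁱ)` is a Nash equilibrium of the MDP
congestion game with costs `ℓⁱ` (every player is supported on greedy actions of its Q-value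
recursion `Qⁱ(x)` with stage costs `ℓⁱ(x)` and kernel `Pⁱ`) if and only if every player `i`'s
block `xⁱ` minimizes the linear objective `y ↦ ∑_{t,s,a} ℓⁱₜₛₐ(x) y_{tsa}` over `𝒳(Pⁱ, p0ⁱ)`. -/
theorem nash_iff_linear_best_response
    (N T S A : ℕ) [NeZero A] (k : ℝ) (hk : 0 ≤ k)
    (P : Fin N → Fin T → Fin S → Fin S → Fin A → ℝ)
    (hP0 : ∀ (i : Fin N) (t : Fin T) (s' s : Fin S) (a : Fin A), 0 ≤ P i t s' s a)
    (hP1 : ∀ (i : Fin N) (t : Fin T) (s : Fin S) (a : Fin A), ∑ s', P i t s' s a = 1)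
    (p0 : Fin N → Fin S → ℝ) (hp0 : ∀ i s, 0 ≤ p0 i s) (hp1 : ∀ i, ∑ s, p0 i s = 1)
    (C : Fin N → Fin (T + 1) → Fin S → Fin A → ℝ)
    (x : Fin N → Fin (T + 1) → Fin S → Fin A → ℝ)
    (hx : ∀ i, Feasible (P i) (p0 i) (x i))
    (Q : Fin N → Fin (T + 1) → Fin S → Fin A → ℝ)
    (hQT : ∀ i s a, Q i (Fin.last T) s a = ell k C x i (Fin.last T) s a)
    (hQrec : ∀ (i : Fin N) (t : Fin T) (s : Fin S) (a : Fin A),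
      Q i t.castSucc s a = ell k C x i t.castSucc s a +
        ∑ s', P i t s' s a * univ.inf' univ_nonempty (fun a' => Q i t.succ s' a')) :
    (∀ (i : Fin N) (t : Fin (T + 1)) (s : Fin S) (a : Fin A),
        0 < x i t s a → Q i t s a = univ.inf' univ_nonempty (fun a' => Q i t s a'))
      ↔ ∀ i : Fin N, ∀ y, Feasible (P i) (p0 i) y →
          ∑ t, ∑ s, ∑ a, ell k C x i t s a * x i t s a
            ≤ ∑ t, ∑ s, ∑ a, ell k C x i t s a * y t s a := by
  constructor
  · intro hN i y hy
    have hxid := key_identity (P i) (p0 i) (ell k C x i) (Q i) (hQT i) (hQrec i) (x i) (hx i)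
    have hyid := key_identity (P i) (p0 i) (ell k C x i) (Q i) (hQT i) (hQrec i) y hy
    have hx0 : ∑ t, ∑ s, ∑ a,
        (Q i t s a - univ.inf' univ_nonempty (fun a' => Q i t s a')) * x i t s a = 0 := by
      refine Finset.sum_eq_zero fun t _ => Finset.sum_eq_zero fun s _ =>
        Finset.sum_eq_zero fun a _ => ?_
      rcases eq_or_lt_of_le ((hx i).1 t s a) with h | h
      · rw [← h, mul_zero]
      · rw [hN i t s a h, sub_self, zero_mul]
    have hy0 : 0 ≤ ∑ t, ∑ s, ∑ a,
        (Q i t s a - univ.inf' univ_nonempty (fun a' => Q i t s a')) * y t s a :=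
      Finset.sum_nonneg fun t _ => Finset.sum_nonneg fun s _ => Finset.sum_nonneg fun a _ =>
        mul_nonneg (sub_nonneg.mpr (Finset.inf'_le _ (mem_univ a))) (hy.1 t s a)
    rw [hxid, hyid, hx0]
    linarith
  · intro hmin i t s a hpos
    obtain ⟨y, hy, hgr⟩ := exists_greedy (P i) (hP0 i) (p0 i) (hp0 i) (Q i)
    have hle := hmin i y hy
    have hxid := key_identity (P i) (p0 i) (ell k C x i) (Q i) (hQT i) (hQrec i) (x i) (hx i)
    have hyid := key_identity (P i) (p0 i) (ell k C x i) (Q i) (hQT i) (hQrec i) y hy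
    have hy0 : ∑ t, ∑ s, ∑ a,
        (Q i t s a - univ.inf' univ_nonempty (fun a' => Q i t s a')) * y t s a = 0 := by
      refine Finset.sum_eq_zero fun t _ => Finset.sum_eq_zero fun s _ =>
        Finset.sum_eq_zero fun a _ => ?_
      by_cases h : y t s a = 0
      · rw [h, mul_zero]
      · rw [hgr t s a h, sub_self, zero_mul]
    rw [hxid, hyid, hy0] at hle
    have hnnS : ∀ t' ∈ (univ : Finset (Fin (T + 1))), (0:ℝ) ≤ ∑ s', ∑ a',
        (Q i t' s' a' - univ.inf' univ_nonempty (fun a'' => Q i t' s' a'')) * x i t' s' a' :=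
      fun t' _ => Finset.sum_nonneg fun s' _ => Finset.sum_nonneg fun a' _ =>
        mul_nonneg (sub_nonneg.mpr (Finset.inf'_le _ (mem_univ a'))) ((hx i).1 t' s' a')
    have hzero : ∑ t', ∑ s', ∑ a',
        (Q i t' s' a' - univ.inf' univ_nonempty (fun a'' => Q i t' s' a'')) * x i t' s' a' = 0 :=
      le_antisymm (by linarith) (Finset.sum_nonneg hnnS)
    have e1 := (Finset.sum_eq_zero_iff_of_nonneg hnnS).mp hzero t (mem_univ t)
    have e2 := (Finset.sum_eq_zero_iff_of_nonneg (fun s' _ => Finset.sum_nonneg fun a' _ =>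
        mul_nonneg (sub_nonneg.mpr (Finset.inf'_le _ (mem_univ a'))) ((hx i).1 t s' a'))).mp
        e1 s (mem_univ s)
    have e3 := (Finset.sum_eq_zero_iff_of_nonneg (fun a' _ =>
        mul_nonneg (sub_nonneg.mpr (Finset.inf'_le _ (mem_univ a'))) ((hx i).1 t s a'))).mp
        e2 a (mem_univ a)
    rcases mul_eq_zero.mp e3 with h | h
    · exact sub_eq_zero.mp h
    · exact absurd h (ne_of_gt hpos)
end
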